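/- There exists a signed graph Ĝ whose underlying graph G has treewidth at most 2 such that the graph G ∪ (strong exact-distance -2 graph of Ĝ) is the complete graph K_7, and hence has chromatic number 7. -/

import Mathlib

open SimpleGraph

/-- The number of negative edges of a walk, where `σ e = true` means edge `e` is negative. -/
def negCount {V : Type} {G : SimpleGraph V} (σ : Sym2 V → Bool) {x y : V}
    (p : G.Walk x y) : ℕ :=
  (p.edges.filter (fun e => σ e)).length

/-- A walk is negative if it contains an odd number of negative edges. -/
def IsNegWalk {V : Type} {G : SimpleGraph V} (σ : Sym2 V → Bool) {x y : V}
    (p : G.Walk x y) : Prop :=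
  Odd (negCount σ p)

/-- The exact-distance `-k` graph of the signed graph `(G, σ)`:
`xy` is an edge iff `d_G(x,y) = k` and every `xy`-path of length `k` is negative. -/
def exactDistNeg {V : Type} (G : SimpleGraph V) (σ : Sym2 V → Bool) (k : ℕ) :
    SimpleGraph V :=
  SimpleGraph.fromRel (fun x y =>
    G.dist x y = k ∧ ∀ p : G.Walk x y, p.IsPath → p.length = k → IsNegWalk σ p)

/-- The strong exact-distance `-k` graph of the signed graph `(G, σ)`:
`xy` is an edge iff `d_G(x,y) = k` and some `xy`-path of length `k` is negative. -/
def strongExactDistNeg {V : Type} (G : SimpleGraph V) (σ : Sym2 V → Bool) (k : ℕ) :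
    SimpleGraph V :=
  SimpleGraph.fromRel (fun x y =>
    G.dist x y = k ∧ ∃ p : G.Walk x y, p.IsPath ∧ p.length = k ∧ IsNegWalk σ p)

/-- `WReach G L k y` : the set of vertices weakly `k`-reachable from `y` w.r.t. ordering `L`. -/
def WReach {V : Type} (G : SimpleGraph V) (L : LinearOrder V) (k : ℕ) (y : V) : Set V :=
  {x | ∃ p : G.Walk x y, p.IsPath ∧ p.length ≤ k ∧ ∀ z ∈ p.support, L.le x z}

/-- The weak `k`-colouring number of `G`. -/
noncomputable def wcol {V : Type} (G : SimpleGraph V) (k : ℕ) : ℕ :=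
  ⨅ L : LinearOrder V, ⨆ y : V, (WReach G L k y).ncard

/-- `DReach G L k y` : the set of vertices `x` such that there is an `xy`-path
`z_0, …, z_s` (`x = z_0`, `y = z_s`) of length `s ≤ k` on which `x` is the `L`-minimum
and `y ≤_L z_i` for all `⌊k/2⌋ + 1 ≤ i ≤ s`. -/
def DReach {V : Type} (G : SimpleGraph V) (L : LinearOrder V) (k : ℕ) (y : V) : Set V :=
  {x | ∃ p : G.Walk x y, p.IsPath ∧ p.length ≤ k ∧ (∀ z ∈ p.support, L.le x z) ∧
        ∀ i, k / 2 + 1 ≤ i → i ≤ p.length → L.le y (p.support.getD i y)}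

/-- The distance-`k`-colouring number of `G`. -/
noncomputable def dcol {V : Type} (G : SimpleGraph V) (k : ℕ) : ℕ :=
  ⨅ L : LinearOrder V, ⨆ y : V, (DReach G L k y).ncard

/-- `SReach G L k y` : the set of vertices strongly `k`-reachable from `y` w.r.t. `L`. -/
def SReach {V : Type} (G : SimpleGraph V) (L : LinearOrder V) (k : ℕ) (y : V) : Set V :=
  {x | ∃ p : G.Walk x y, p.IsPath ∧ p.length ≤ k ∧ (∀ z ∈ p.support, L.le x z) ∧
        ∀ z ∈ p.support, z ≠ x → L.le y z}

/-- The strong `k`-colouring number of `G`. -/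
noncomputable def scol {V : Type} (G : SimpleGraph V) (k : ℕ) : ℕ :=
  ⨅ L : LinearOrder V, ⨆ y : V, (SReach G L k y).ncard

/-- `H` is a minor of `G` (branch-set definition). -/
def IsMinor {W V : Type} (H : SimpleGraph W) (G : SimpleGraph V) : Prop :=
  ∃ B : W → Set V,
    (∀ w, (B w).Nonempty) ∧
    (∀ w, (G.induce (B w)).Connected) ∧
    (Pairwise (Function.onFun Disjoint B)) ∧
    ∀ w w', H.Adj w w' → ∃ u ∈ B w, ∃ v ∈ B w', G.Adj u v

/-- `G` is planar iff it has no `K₅` and no `K₃,₃` minor (Wagner's theorem). -/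
def IsPlanar {V : Type} (G : SimpleGraph V) : Prop :=
  ¬ IsMinor (completeGraph (Fin 5)) G ∧
  ¬ IsMinor (completeBipartiteGraph (Fin 3) (Fin 3)) G

/-- `G` is outerplanar iff it has no `K₄` and no `K₂,₃` minor. -/
def IsOuterplanar {V : Type} (G : SimpleGraph V) : Prop :=
  ¬ IsMinor (completeGraph (Fin 4)) G ∧
  ¬ IsMinor (completeBipartiteGraph (Fin 2) (Fin 3)) G

/-- `G` has treewidth at most `t` (tree-decomposition definition). -/
def HasTreewidthLE {V : Type} (G : SimpleGraph V) (t : ℕ) : Prop :=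
  ∃ (ι : Type) (T : SimpleGraph ι) (B : ι → Finset V),
    T.Connected ∧ T.IsAcyclic ∧
    (∀ v, ∃ i, v ∈ B i) ∧
    (∀ u v, G.Adj u v → ∃ i, u ∈ B i ∧ v ∈ B i) ∧
    (∀ v, (T.induce {i | v ∈ B i}).Connected) ∧
    (∀ i, (B i).card ≤ t + 1)

def gRel (x y : Fin 7) : Prop :=
  (x, y) ∈ ([(0,1),(1,2),(3,4),(4,5),(6,0),(6,1),(6,2),(6,3),(6,4),(6,5)] : List (Fin 7 × Fin 7))

instance : DecidableRel gRel := fun _ _ => List.instDecidableMemOfLawfulBEq _ _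

def G0 : SimpleGraph (Fin 7) := SimpleGraph.fromRel gRel

instance : DecidableRel G0.Adj := fun a b =>
  decidable_of_iff (a ≠ b ∧ (gRel a b ∨ gRel b a)) Iff.rfl

def sgn (e : Sym2 (Fin 7)) : Bool :=
  decide (e ∈ ([s(0,1), s(3,4), s(6,3), s(6,4), s(6,5)] : List (Sym2 (Fin 7))))

lemma strong_adj {x y z : Fin 7} (hxz : x ≠ z) (hzy : z ≠ y)
    (h1 : G0.Adj x z) (h2 : G0.Adj z y) (hxy : x ≠ y) (hn : ¬ G0.Adj x y)
    (hs : xor (sgn s(x,z)) (sgn s(z,y)) = true) :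
    (strongExactDistNeg G0 sgn 2).Adj x y := by
  set p : G0.Walk x y := Walk.cons h1 (Walk.cons h2 Walk.nil) with hp
  have hlen : p.length = 2 := rfl
  have hpath : p.IsPath := by
    rw [Walk.isPath_def, hp]
    simp [hxz, hzy, hxy]
  have hdist : G0.dist x y = 2 := by
    have hle : G0.dist x y ≤ 2 := hlen ▸ SimpleGraph.dist_le p
    have h0 : G0.dist x y ≠ 0 := by
      rw [Ne, (p.reachable).dist_eq_zero_iff]
      exact hxy
    have h1' : G0.dist x y ≠ 1 := by
      rw [Ne, SimpleGraph.dist_eq_one_iff_adj]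
      exact hn
    omega
  have hneg : IsNegWalk sgn p := by
    unfold IsNegWalk negCount
    have hedges : p.edges = [s(x,z), s(z,y)] := rfl
    rw [hedges]
    rcases h : sgn s(x,z) <;> rcases h' : sgn s(z,y) <;>
      simp [h, h'] <;> simp [h, h'] at hs
  exact ⟨hxy, Or.inl ⟨hdist, p, hpath, hlen, hneg⟩⟩

lemma sup_top : G0 ⊔ strongExactDistNeg G0 sgn 2 = ⊤ := by
  ext x y
  simp only [sup_adj, top_adj]
  constructor
  · rintro (h | h)
    · exact h.ne
    · exact h.ne
  · intro hxy
    by_cases h : G0.Adj x y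
    · exact Or.inl h
    · refine Or.inr ?_
      revert hxy h
      fin_cases x <;> fin_cases y <;> intro hxy h <;>
        first
          | exact absurd rfl hxy
          | exact absurd (by decide) h
          | exact strong_adj (z := 6) (by decide) (by decide) (by decide) (by decide) hxy h (by decide)
          | exact strong_adj (z := 1) (by decide) (by decide) (by decide) (by decide) hxy h (by decide)
          | exact strong_adj (z := 4) (by decide) (by decide) (by decide) (by decide) hxy h (by decide)

instance pg4adj : DecidableRel (pathGraph 4).Adj := fun _ _ =>
  decidable_of_iff _ (pathGraph_adj).symm

instance pg4del (e : Sym2 (Fin 4)) : DecidableRel (pathGraph 4 \ fromEdgeSet {e}).Adj := fun a b =>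
  decidable_of_iff ((pathGraph 4).Adj a b ∧ ¬(s(a,b) = e ∧ a ≠ b)) (by
    rw [sdiff_adj, fromEdgeSet_adj, Set.mem_singleton_iff])

def bags : Fin 4 → Finset (Fin 7) := ![{0,1,6}, {1,2,6}, {3,4,6}, {4,5,6}]

lemma tw2 : HasTreewidthLE G0 2 := by
  refine ⟨Fin 4, pathGraph 4, bags, pathGraph_connected 3, ?_, by decide, by decide, ?_, by decide⟩
  · rw [isAcyclic_iff_forall_adj_isBridge]
    intro v w h
    rw [isBridge_iff]
    revert h
    fin_cases v <;> fin_cases w <;> decide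
  · have adjr : ∀ (S : Set (Fin 4)) (a b : Fin 4) (ha : a ∈ S) (hb : b ∈ S),
        (pathGraph 4).Adj a b →
        ((pathGraph 4).induce S).Reachable ⟨a, ha⟩ ⟨b, hb⟩ := by
      intro S a b ha hb h
      exact Adj.reachable (comap_adj.mpr h)
    intro v
    fin_cases v
    · rw [connected_iff_exists_forall_reachable]
      refine ⟨⟨0, by decide⟩, ?_⟩
      rintro ⟨a, ha⟩
      fin_cases a
      · exact Reachable.refl _
      · exact absurd ha (by decide)
      · exact absurd ha (by decide)
      · exact absurd ha (by decide)
    · rw [connected_iff_exists_forall_reachable]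
      refine ⟨⟨0, by decide⟩, ?_⟩
      rintro ⟨a, ha⟩
      fin_cases a
      · exact Reachable.refl _
      · exact adjr _ _ _ (by decide) ha (by decide)
      · exact absurd ha (by decide)
      · exact absurd ha (by decide)
    · rw [connected_iff_exists_forall_reachable]
      refine ⟨⟨1, by decide⟩, ?_⟩
      rintro ⟨a, ha⟩
      fin_cases a
      · exact absurd ha (by decide)
      · exact Reachable.refl _
      · exact absurd ha (by decide)
      · exact absurd ha (by decide)
    · rw [connected_iff_exists_forall_reachable]
      refine ⟨⟨2, by decide⟩, ?_⟩
      rintro ⟨a, ha⟩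
      fin_cases a
      · exact absurd ha (by decide)
      · exact absurd ha (by decide)
      · exact Reachable.refl _
      · exact absurd ha (by decide)
    · rw [connected_iff_exists_forall_reachable]
      refine ⟨⟨2, by decide⟩, ?_⟩
      rintro ⟨a, ha⟩
      fin_cases a
      · exact absurd ha (by decide)
      · exact absurd ha (by decide)
      · exact Reachable.refl _
      · exact adjr _ _ _ (by decide) ha (by decide)
    · rw [connected_iff_exists_forall_reachable]
      refine ⟨⟨3, by decide⟩, ?_⟩
      rintro ⟨a, ha⟩
      fin_cases a
      · exact absurd ha (by decide)
      · exact absurd ha (by decide)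
      · exact absurd ha (by decide)
      · exact Reachable.refl _
    · rw [connected_iff_exists_forall_reachable]
      refine ⟨⟨0, by decide⟩, ?_⟩
      rintro ⟨a, ha⟩
      fin_cases a
      · exact Reachable.refl _
      · exact adjr _ _ _ (by decide) ha (by decide)
      · exact Reachable.trans (v := ⟨1, by decide⟩)
          (adjr _ _ _ (by decide) (by decide) (by decide))
          (adjr _ _ _ (by decide) ha (by decide))
      · exact Reachable.trans (v := ⟨1, by decide⟩)
          (adjr _ _ _ (by decide) (by decide) (by decide))
          (Reachable.trans (v := ⟨2, by decide⟩)
            (adjr _ _ _ (by decide) (by decide) (by decide))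
            (adjr _ _ _ (by decide) ha (by decide)))
theorem exists_treewidth_two_union_strongExactDistNeg_complete_seven :
    ∃ (V : Type) (i : Fintype V) (G : SimpleGraph V) (σ : Sym2 V → Bool),
      HasTreewidthLE G 2 ∧ @Fintype.card V i = 7 ∧
      G ⊔ strongExactDistNeg G σ 2 = ⊤ ∧
      (G ⊔ strongExactDistNeg G σ 2).chromaticNumber = 7 := by
  refine ⟨Fin 7, inferInstance, G0, sgn, tw2, by simp, sup_top, ?_⟩
  rw [sup_top, chromaticNumber_top]
  simp
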